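/- Let r ≥ 1 and d ≥ 3 be integers, and suppose G : [0,1] → [0,1] satisfies G(x) = ∫_x^1 (1 − G(t)^r)^{d−1} dt for all x ∈ [0,1]. Then ∑_{n≥0} C(n+d−2, d−2)·G(x)^{rn+1}/(rn+1) = 1 − x for all x ∈ [0,1]. -/

import Mathlib

open MeasureTheory Set

lemma aux_tsum (r d : ℕ) (hr : 1 ≤ r) (hd : 3 ≤ d) (y : ℝ) (hy0 : 0 ≤ y) (hy1 : y < 1) :
    ∑' m : ℕ, ((m + d - 2).choose (d - 2) : ℝ) * y ^ (r * m + 1) / (r * m + 1)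
      = ∫ t in (0:ℝ)..y, ((1 - t ^ r) ^ (d - 1))⁻¹ := by
  have hyr : y ^ r < 1 := pow_lt_one₀ hy0 hy1 (by omega)
  have hyr0 : 0 ≤ y ^ r := pow_nonneg hy0 r
  set c : ℕ → ℝ := fun n => ((n + d - 2).choose (d - 2) : ℝ) with hc
  have hc_eq : ∀ n : ℕ, c n = ((n + (d-2)).choose (d - 2) : ℝ) := by
    intro n; simp only [hc]; congr 2; omega
  have hcnn : ∀ n, 0 ≤ c n := fun n => Nat.cast_nonneg _
  set F : ℕ → ℝ → ℝ := fun n t => c n * t ^ (r * n) with hF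
  have hsum0 : Summable (fun n => c n * (y ^ r) ^ n) := by
    have := summable_choose_mul_geometric_of_norm_lt_one (R := ℝ) (d - 2)
      (r := y ^ r) (by rwa [Real.norm_eq_abs, abs_of_nonneg hyr0])
    apply this.congr
    intro n; rw [hc_eq]
  have hF_int : ∀ n, Integrable (F n) (volume.restrict (Ioc (0:ℝ) y)) := by
    intro n
    exact (Continuous.integrableOn_Ioc (by continuity))
  have hval : ∀ n : ℕ, ∫ t in (0:ℝ)..y, F n t = c n * y ^ (r * n + 1) / (r * n + 1) := by
    intro n
    rw [intervalIntegral.integral_const_mul, integral_pow]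
    rw [zero_pow (by omega), sub_zero, mul_div_assoc]
    push_cast
    ring
  have hFnonneg : ∀ n, ∀ t ∈ Ioc (0:ℝ) y, 0 ≤ F n t := by
    intro n t ht
    exact mul_nonneg (hcnn n) (pow_nonneg ht.1.le _)
  have hnorm : ∀ n : ℕ, ∫ t in Ioc (0:ℝ) y, ‖F n t‖ = c n * y ^ (r * n + 1) / (r * n + 1) := by
    intro n
    rw [← hval n, intervalIntegral.integral_of_le hy0]
    apply setIntegral_congr_fun measurableSet_Ioc
    intro t ht
    exact Real.norm_of_nonneg (hFnonneg n t ht)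
  have hF_sum : Summable (fun n => ∫ t in Ioc (0:ℝ) y, ‖F n t‖) := by
    rw [funext hnorm]
    apply Summable.of_nonneg_of_le
      (fun n => by positivity)
      (fun n => ?_) (hsum0.mul_right y)
    have h1 : (1:ℝ) ≤ (r * n + 1 : ℝ) := le_add_of_nonneg_left (by positivity)
    calc c n * y ^ (r * n + 1) / (r * n + 1) ≤ c n * y ^ (r * n + 1) / 1 := by
          apply div_le_div_of_nonneg_left (by positivity) one_pos h1
      _ = c n * ((y ^ r) ^ n * y) := by rw [div_one, ← pow_mul, ← pow_succ]
      _ = c n * (y ^ r) ^ n * y := by ring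
  have hswap := integral_tsum_of_summable_integral_norm hF_int hF_sum
  have hlhs : ∑' n, ∫ t in Ioc (0:ℝ) y, F n t
      = ∑' m : ℕ, ((m + d - 2).choose (d - 2) : ℝ) * y ^ (r * m + 1) / (r * m + 1) := by
    apply tsum_congr; intro n
    rw [← intervalIntegral.integral_of_le hy0, hval]
  rw [← hlhs, hswap, intervalIntegral.integral_of_le hy0]
  apply setIntegral_congr_fun measurableSet_Ioc
  intro t ht
  have ht0 : 0 ≤ t := ht.1.le
  have ht1 : t < 1 := lt_of_le_of_lt ht.2 hy1
  have htr : ‖t ^ r‖ < 1 := by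
    rw [Real.norm_eq_abs, abs_of_nonneg (pow_nonneg ht0 r)]
    exact pow_lt_one₀ ht0 ht1 (by omega)
  have hs := hasSum_choose_mul_geometric_of_norm_lt_one (𝕜 := ℝ) (d - 2) htr
  have hs' : HasSum (fun n => F n t) (((1 - t ^ r) ^ (d - 1))⁻¹) := by
    have : (1:ℝ) / (1 - t ^ r) ^ (d - 2 + 1) = ((1 - t ^ r) ^ (d - 1))⁻¹ := by
      rw [one_div]; congr 2; omega
    rw [← this]
    apply HasSum.congr_fun hs
    intro n
    show c n * t ^ (r * n) = _
    rw [hc_eq, pow_mul]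
  exact hs'.tsum_eq

lemma aux_meas (r d : ℕ) (hr : 1 ≤ r) (hd : 3 ≤ d) (G : ℝ → ℝ)
    (hrange : ∀ x ∈ Set.Icc (0 : ℝ) 1, G x ∈ Set.Icc (0 : ℝ) 1)
    (hG : ∀ x ∈ Set.Icc (0 : ℝ) 1, G x = ∫ t in x..(1 : ℝ), (1 - G t ^ r) ^ (d - 1)) :
    AEStronglyMeasurable (fun t => (1 - G t ^ r) ^ (d - 1))
      (volume.restrict (Ioc (0:ℝ) 1)) := by
  set f : ℝ → ℝ := fun t => (1 - G t ^ r) ^ (d - 1) with hf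
  set A : Set ℝ := {x | AEStronglyMeasurable f (volume.restrict (Ioc x 1))} with hA
  have hA_top : ∀ x : ℝ, 1 ≤ x → x ∈ A := by
    intro x hx
    show AEStronglyMeasurable f _
    rw [Set.Ioc_eq_empty (by simpa using hx), Measure.restrict_empty]
    exact aestronglyMeasurable_zero_measure f
  have hA_mono : ∀ x y : ℝ, x ≤ y → x ∈ A → y ∈ A := by
    intro x y hxy hx
    exact hx.mono_measure (Measure.restrict_mono (Set.Ioc_subset_Ioc_left hxy) le_rfl)
  have hA_lim : ∀ x : ℝ, (∀ n : ℕ, x + 1/(n+1) ∈ A) → x ∈ A := by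
    intro x hx
    rcases le_or_gt 1 x with h1 | h1
    · exact hA_top x h1
    · have hU : Ioc x 1 = ⋃ n : ℕ, Ioc (x + 1/(n+1)) 1 := by
        ext t
        simp only [mem_Ioc, mem_iUnion]
        constructor
        · rintro ⟨htx, ht1⟩
          obtain ⟨n, hn⟩ := exists_nat_one_div_lt (sub_pos.mpr htx)
          exact ⟨n, by linarith, ht1⟩
        · rintro ⟨n, hn, ht1⟩
          have : (0:ℝ) < 1/(n+1) := by positivity
          exact ⟨by linarith, ht1⟩
      show AEStronglyMeasurable f _
      rw [hU]
      exact (aestronglyMeasurable_iUnion_iff).mpr fun n => hx n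
  -- the infimum
  set a : ℝ := sInf (A ∩ Icc 0 1) with ha
  have hne : (1:ℝ) ∈ A ∩ Icc 0 1 := ⟨hA_top 1 le_rfl, by norm_num⟩
  have hbdd : BddBelow (A ∩ Icc 0 1) := ⟨0, fun y hy => hy.2.1⟩
  have ha0 : 0 ≤ a := le_csInf ⟨1, hne⟩ (fun y hy => hy.2.1)
  have ha1 : a ≤ 1 := csInf_le hbdd hne
  have hgt : ∀ x : ℝ, a < x → x ∈ A := by
    intro x hax
    obtain ⟨y, hy, hyx⟩ := exists_lt_of_csInf_lt ⟨1, hne⟩ hax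
    exact hA_mono y x hyx.le hy.1
  have haA : a ∈ A := by
    apply hA_lim
    intro n
    apply hgt
    have : (0:ℝ) < 1/(n+1) := by positivity
    linarith
  have hfin : a = 0 := by
    by_contra h
    have hapos : 0 < a := lt_of_le_of_ne ha0 (Ne.symm h)
    -- G = 0 on [0, a)
    have hG0 : ∀ x : ℝ, 0 ≤ x → x < a → G x = 0 := by
      intro x hx0 hxa
      have hxA : x ∉ A := by
        intro hxA
        have : a ≤ x := csInf_le hbdd ⟨hxA, hx0, by linarith⟩
        linarith
      have hx1 : x ∈ Icc (0:ℝ) 1 := ⟨hx0, by linarith⟩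
      rw [hG x hx1, intervalIntegral.integral_of_le (by linarith)]
      exact integral_non_aestronglyMeasurable hxA
    have hf1 : ∀ x : ℝ, 0 ≤ x → x < a → f x = 1 := by
      intro x hx0 hxa
      simp only [hf, hG0 x hx0 hxa, zero_pow (by omega : r ≠ 0), sub_zero, one_pow]
    -- show a/2 ∈ A
    have hhalf : a/2 ∈ A := by
      have hsplit : Ioc (a/2) 1 = Ioo (a/2) a ∪ Icc a 1 := by
        ext t
        simp only [mem_Ioc, mem_union, mem_Ioo, mem_Icc]
        constructor
        · rintro ⟨ht1, ht2⟩
          rcases lt_or_ge t a with h | h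
          · exact Or.inl ⟨ht1, h⟩
          · exact Or.inr ⟨h, ht2⟩
        · rintro (⟨h1, h2⟩ | ⟨h1, h2⟩)
          · exact ⟨h1, by linarith⟩
          · constructor <;> linarith
      show AEStronglyMeasurable f _
      rw [hsplit]
      apply (aestronglyMeasurable_union_iff).mpr
      constructor
      · apply (aestronglyMeasurable_const (b := (1:ℝ))).congr
        apply (ae_restrict_iff' measurableSet_Ioo).mpr
        filter_upwards with t ht
        exact (hf1 t (by linarith [ht.1]) ht.2).symm
      · rw [Measure.restrict_congr_set Ioc_ae_eq_Icc.symm]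
        exact haA
    have : a ≤ a/2 := csInf_le hbdd ⟨hhalf, by linarith, by linarith⟩
    linarith
  rw [← hfin]
  exact haA

theorem series_equation_for_G (r d : ℕ) (hr : 1 ≤ r) (hd : 3 ≤ d)
    (G : ℝ → ℝ)
    (hrange : ∀ x ∈ Set.Icc (0 : ℝ) 1, G x ∈ Set.Icc (0 : ℝ) 1)
    (hG : ∀ x ∈ Set.Icc (0 : ℝ) 1, G x = ∫ t in x..(1 : ℝ), (1 - G t ^ r) ^ (d - 1)) :
    ∀ x ∈ Set.Icc (0 : ℝ) 1,
      ∑' m : ℕ, ((m + d - 2).choose (d - 2) : ℝ) * G x ^ (r * m + 1) / (r * m + 1) = 1 - x := by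
  set f : ℝ → ℝ := fun t => (1 - G t ^ r) ^ (d - 1) with hf
  have hf01 : ∀ t ∈ Icc (0:ℝ) 1, f t ∈ Icc (0:ℝ) 1 := by
    intro t ht
    obtain ⟨h0, h1⟩ := hrange t ht
    have hp0 : 0 ≤ G t ^ r := pow_nonneg h0 r
    have hp1 : G t ^ r ≤ 1 := pow_le_one₀ h0 h1
    exact ⟨pow_nonneg (by linarith) _, pow_le_one₀ (by linarith) (by linarith)⟩
  have hmeas := aux_meas r d hr hd G hrange hG
  have hIntOn : IntegrableOn f (Ioc (0:ℝ) 1) := by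
    apply Integrable.mono' (integrable_const (1:ℝ)) hmeas
    apply (ae_restrict_iff' measurableSet_Ioc).mpr
    filter_upwards with t ht
    have := hf01 t ⟨ht.1.le, ht.2⟩
    rw [Real.norm_of_nonneg this.1]; exact this.2
  have hII : ∀ x ∈ Icc (0:ℝ) 1, ∀ y ∈ Icc (0:ℝ) 1, IntervalIntegrable f volume x y := by
    intro x hx y hy
    constructor
    · exact hIntOn.mono_set (Set.Ioc_subset_Ioc hx.1 hy.2)
    · exact hIntOn.mono_set (Set.Ioc_subset_Ioc hy.1 hx.2)
  have hsplit : ∀ x ∈ Icc (0:ℝ) 1, ∀ y ∈ Icc (0:ℝ) 1, x ≤ y →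
      G x = (∫ t in x..y, f t) + G y := by
    intro x hx y hy hxy
    rw [hG x hx, hG y hy,
      intervalIntegral.integral_add_adjacent_intervals (hII x hx y hy) (hII y hy 1 (by norm_num))]
  have hGanti : ∀ x ∈ Icc (0:ℝ) 1, ∀ y ∈ Icc (0:ℝ) 1, x ≤ y → G y ≤ G x := by
    intro x hx y hy hxy
    rw [hsplit x hx y hy hxy]
    have : 0 ≤ ∫ t in x..y, f t := by
      apply intervalIntegral.integral_nonneg hxy
      intro t ht
      exact (hf01 t ⟨le_trans hx.1 ht.1, le_trans ht.2 hy.2⟩).1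
    linarith
  have hG1 : G 1 = 0 := by
    rw [hG 1 (by norm_num), intervalIntegral.integral_same]
  -- continuity
  have hGcont : ContinuousOn G (Icc (0:ℝ) 1) := by
    have hprim : ContinuousOn (fun x => (∫ t in (0:ℝ)..1, f t) - ∫ t in (0:ℝ)..x, f t)
        (Icc (0:ℝ) 1) := by
      apply ContinuousOn.sub continuousOn_const
      have := intervalIntegral.continuousOn_primitive_interval
        (a := (0:ℝ)) (b := (1:ℝ)) (μ := volume) (f := f) ?_
      · simpa using this
      · rw [uIcc_of_le (by norm_num : (0:ℝ) ≤ 1)]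
        exact (integrableOn_Icc_iff_integrableOn_Ioc).mpr hIntOn
    apply hprim.congr
    intro x hx
    have h1 := hsplit 0 (by norm_num) x hx hx.1
    have h2 := hG 0 (by norm_num)
    simp only []
    linarith
  -- G 0 < 1
  have hG0lt1 : G 0 < 1 := by
    by_contra hcon
    push_neg at hcon
    have hG0 : G 0 = 1 := le_antisymm (hrange 0 (by norm_num)).2 hcon
    have hint1 : ∫ _ in Ioc (0:ℝ) 1, (1:ℝ) = 1 := by
      simp [Real.volume_Ioc]
    have hG0eq : ∫ t in Ioc (0:ℝ) 1, f t = 1 := by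
      rw [← intervalIntegral.integral_of_le (by norm_num : (0:ℝ) ≤ 1), ← hG 0 (by norm_num), hG0]
    have hzero_int : ∫ t in Ioc (0:ℝ) 1, (1 - f t) = 0 := by
      rw [integral_sub (integrable_const 1) hIntOn, hint1, hG0eq, sub_self]
    have hnonneg : 0 ≤ᵐ[volume.restrict (Ioc (0:ℝ) 1)] fun t => 1 - f t := by
      apply (ae_restrict_iff' measurableSet_Ioc).mpr
      filter_upwards with t ht
      have := hf01 t ⟨ht.1.le, ht.2⟩
      simp only [Pi.zero_apply]
      linarith [this.2]
    have hint : Integrable (fun t => 1 - f t) (volume.restrict (Ioc (0:ℝ) 1)) :=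
      (integrable_const 1).sub hIntOn
    have hae : (fun t => 1 - f t) =ᵐ[volume.restrict (Ioc (0:ℝ) 1)] 0 :=
      (integral_eq_zero_iff_of_nonneg_ae hnonneg hint).mp hzero_int
    have hone : ∀ᵐ t ∂(volume : Measure ℝ), t ∈ Ioc (0:ℝ) 1 → G t = 0 := by
      have := (ae_restrict_iff' measurableSet_Ioc).mp hae
      filter_upwards [this] with t ht hmem
      have hft : f t = 1 := by have := ht hmem; simp only [Pi.zero_apply] at this; linarith
      have hGt := hrange t ⟨hmem.1.le, hmem.2⟩
      by_contra hne
      have hGpos : 0 < G t := lt_of_le_of_ne hGt.1 (Ne.symm hne)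
      have h1 : 0 < G t ^ r := pow_pos hGpos r
      have h2 : G t ^ r ≤ 1 := pow_le_one₀ hGt.1 hGt.2
      have h3 : (1 - G t ^ r) ^ (d-1) < 1 :=
        pow_lt_one₀ (by linarith) (by linarith) (by omega)
      rw [hf] at hft
      simp only at hft
      linarith
    have hN : volume {t : ℝ | ¬ (t ∈ Ioc (0:ℝ) 1 → G t = 0)} = 0 := hone
    have hfreq : ∃ᶠ t in nhdsWithin 0 (Icc (0:ℝ) 1), G t ∈ ({0} : Set ℝ) := by
      by_contra hnf
      rw [Filter.not_frequently] at hnf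
      obtain ⟨ε, hε, hsubset⟩ := Metric.mem_nhdsWithin_iff.mp hnf
      set δ := min ε 1 with hδ
      have hδpos : 0 < δ := lt_min hε one_pos
      have hsub2 : Ioo (0:ℝ) δ ⊆ {t : ℝ | ¬ (t ∈ Ioc (0:ℝ) 1 → G t = 0)} := by
        intro t ht
        have htε : |t| < ε := by
          rw [abs_of_pos ht.1]; exact lt_of_lt_of_le ht.2 (min_le_left _ _)
        have ht1 : t ≤ 1 := le_of_lt (lt_of_lt_of_le ht.2 (min_le_right _ _))
        have := hsubset ⟨Metric.mem_ball.mpr (by simpa [Real.dist_eq] using htε),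
          ⟨ht.1.le, ht1⟩⟩
        simp only [mem_setOf_eq, mem_singleton_iff] at this ⊢
        intro hi
        exact this (hi ⟨ht.1, ht1⟩)
      have := measure_mono_null hsub2 hN
      rw [Real.volume_Ioo] at this
      simp only [ENNReal.ofReal_eq_zero] at this
      linarith
    have htend : Filter.Tendsto G (nhdsWithin 0 (Icc (0:ℝ) 1)) (nhds (G 0)) :=
      hGcont 0 ⟨le_rfl, by norm_num⟩
    have := mem_closure_of_frequently_of_tendsto hfreq htend
    rw [closure_singleton, mem_singleton_iff] at this
    rw [this] at hG0
    norm_num at hG0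
  have hlt1 : ∀ x ∈ Icc (0:ℝ) 1, G x < 1 := by
    intro x hx
    exact lt_of_le_of_lt (hGanti 0 (by norm_num) x hx hx.1) hG0lt1
  -- substitution
  have hmain : ∀ x ∈ Icc (0:ℝ) 1, ∫ t in (0:ℝ)..(G x), ((1 - t ^ r) ^ (d - 1))⁻¹ = 1 - x := by
    intro x hx
    set p : ℝ → ℝ := fun t => max 0 (min t 1) with hp
    have hpc : Continuous p := continuous_const.max (continuous_id.min continuous_const)
    have hpmem : ∀ t, p t ∈ Icc (0:ℝ) 1 :=
      fun t => ⟨le_max_left _ _, max_le (by norm_num) (min_le_right _ _)⟩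
    have hpid : ∀ t ∈ Icc (0:ℝ) 1, p t = t := by
      intro t ht
      simp only [hp]
      rw [min_eq_left ht.2, max_eq_right ht.1]
    have hGp : Continuous (fun t => G (p t)) := hGcont.comp_continuous hpc hpmem
    set fh : ℝ → ℝ := fun t => (1 - G (p t) ^ r) ^ (d - 1) with hfh
    have hfhc : Continuous fh := (continuous_const.sub (hGp.pow r)).pow (d-1)
    have hfheq : ∀ t ∈ Icc (0:ℝ) 1, fh t = f t := by
      intro t ht
      simp only [hfh, hf, hpid t ht]
    set K : ℝ → ℝ := fun u => ∫ t in u..(1:ℝ), fh t with hKdef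
    have hKG : ∀ u ∈ Icc (0:ℝ) 1, K u = G u := by
      intro u hu
      rw [hG u hu]
      apply intervalIntegral.integral_congr
      intro t ht
      rw [uIcc_of_le hu.2] at ht
      exact hfheq t ⟨le_trans hu.1 ht.1, ht.2⟩
    have hKd : ∀ u : ℝ, HasDerivAt K (-(fh u)) u := by
      intro u
      exact intervalIntegral.integral_hasDerivAt_left (hfhc.intervalIntegrable u 1)
        (hfhc.stronglyMeasurableAtFilter _ _) hfhc.continuousAt
    have himg : ∀ t ∈ uIcc x (1:ℝ), K t ∈ Icc (0:ℝ) (G x) := by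
      intro t ht
      rw [uIcc_of_le hx.2] at ht
      have ht' : t ∈ Icc (0:ℝ) 1 := ⟨le_trans hx.1 ht.1, ht.2⟩
      rw [hKG t ht']
      exact ⟨(hrange t ht').1, hGanti x hx t ht' ht.1⟩
    have hcontg : ContinuousOn (fun u : ℝ => ((1 - u ^ r) ^ (d - 1))⁻¹) (Icc (0:ℝ) (G x)) := by
      apply ContinuousOn.inv₀
        (((continuous_const.sub (continuous_pow r)).pow (d-1)).continuousOn)
      intro u hu
      have hu1 : u < 1 := lt_of_le_of_lt hu.2 (hlt1 x hx)
      have : u ^ r < 1 := pow_lt_one₀ hu.1 hu1 (by omega)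
      exact ne_of_gt (pow_pos (by show (0:ℝ) < 1 - u ^ r; linarith) _)
    have hsub := intervalIntegral.integral_comp_smul_deriv' (f := K)
      (f' := fun t => -(fh t)) (g := fun u : ℝ => ((1 - u ^ r) ^ (d - 1))⁻¹) (a := x) (b := 1)
      (fun t _ => hKd t) (hfhc.neg.continuousOn)
      (hcontg.mono (fun u hu => by obtain ⟨t, ht, rfl⟩ := hu; exact himg t ht))
    have hKx : K x = G x := hKG x hx
    have hK1 : K 1 = 0 := by rw [hKG 1 ⟨by norm_num, le_rfl⟩, hG1]
    rw [hKx, hK1] at hsub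
    have hlhs : (∫ t in x..(1:ℝ), (-(fh t)) •
        ((fun u : ℝ => ((1 - u ^ r) ^ (d - 1))⁻¹) ∘ K) t) = x - 1 := by
      have hcg : ∀ t ∈ uIcc x (1:ℝ), (-(fh t)) •
          ((fun u : ℝ => ((1 - u ^ r) ^ (d - 1))⁻¹) ∘ K) t = -1 := by
        intro t ht
        rw [uIcc_of_le hx.2] at ht
        have ht' : t ∈ Icc (0:ℝ) 1 := ⟨le_trans hx.1 ht.1, ht.2⟩
        have hKt : K t = G t := hKG t ht'
        have hft : fh t = (1 - G t ^ r) ^ (d-1) := hfheq t ht'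
        have hGt1 : G t < 1 := hlt1 t ht'
        have hbase : 0 < 1 - G t ^ r := by
          have := pow_lt_one₀ (n := r) (hrange t ht').1 hGt1 (by omega)
          linarith
        have hpow : (0:ℝ) < (1 - G t ^ r) ^ (d-1) := pow_pos hbase _
        simp only [Function.comp_apply, smul_eq_mul, hKt, hft]
        field_simp
      rw [intervalIntegral.integral_congr hcg]
      simp [smul_eq_mul]
    rw [hlhs] at hsub
    rw [intervalIntegral.integral_symm] at hsub
    linarith
  intro x hx
  rw [aux_tsum r d hr hd (G x) (hrange x hx).1 (hlt1 x hx)]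
  exact hmain x hx
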